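/- Let ρ, α, β ∈ ℝ, γ > 0, c₂ > 0; set K = K_{c₂}, L = L_{c₂}, ‖K‖ = (∫₀¹∫₀ˣ K(x,y)² dy dx)^{1/2}, ‖L‖ = (∫₀¹∫₀ˣ L(x,y)² dy dx)^{1/2}. Suppose w̃, v : [0,1] × [0,∞) → ℝ are continuous, twice continuously differentiable in x with jointly continuous spatial derivatives, w̃ is continuously differentiable in t with w̃_t jointly continuous, and for all x ∈ [0,1], t ≥ 0: w̃_t = w̃_xx − (c₂ + ρ)w̃ + αv − α∫₀ˣ K(x,y)v(y,t)dy; 0 = v_xx − γv + βw̃ + β∫₀ˣ L(x,y)w̃(y,t)dy; w̃_x(0,t) = w̃_x(1,t) = 0; v_x(0,t) = v_x(1,t) = 0. If c₂ + ρ > (|αβ|/γ)·(1 + ‖L‖)·(1 + ‖K‖), then with c₃ = (c₂ + ρ) − (|αβ|/γ)·(1 + ‖L‖)·(1 + ‖K‖), for all t ≥ 0: ∫₀¹ w̃(x,t)² dx ≤ e^{−2c₃t}·∫₀¹ w̃(x,0)² dx, and moreover ∫₀¹ v(x,t)² dx ≤ (β/γ)²·(1 + ‖L‖)²·e^{−2c₃t}·∫₀¹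 w̃(x,0)² dx. -/

import Mathlib

/-- The backstepping kernel `K_c`. -/
noncomputable def Kker (c x y : ℝ) : ℝ :=
  -(c / 2) * x * ∑' m : ℕ, (c * (x ^ 2 - y ^ 2) / 4) ^ m /
    ((Nat.factorial m : ℝ) * (Nat.factorial (m + 1) : ℝ))

/-- The inverse backstepping kernel `L_c`. -/
noncomputable def Lker (c x y : ℝ) : ℝ :=
  -(c / 2) * x * ∑' m : ℕ, (-1 : ℝ) ^ m * (c * (x ^ 2 - y ^ 2) / 4) ^ m /
    ((Nat.factorial m : ℝ) * (Nat.factorial (m + 1) : ℝ))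

/-- L² norm of a kernel over the triangle {0 ≤ y ≤ x ≤ 1}. -/
noncomputable def kerNorm (f : ℝ → ℝ → ℝ) : ℝ :=
  Real.sqrt (∫ x in (0:ℝ)..1, ∫ y in (0:ℝ)..x, (f x y) ^ 2)

open MeasureTheory Set intervalIntegral

/-- Continuity of an everywhere-convergent power series dominated by `exp`. -/
lemma continuous_series_aux (a : ℕ → ℝ) (ha : ∀ m, |a m| ≤ 1 / (Nat.factorial m : ℝ)) :
    Continuous fun z : ℝ => ∑' m : ℕ, a m * z ^ m := by
  rw [continuous_iff_continuousAt]
  intro z₀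
  have hmem : Metric.closedBall (0 : ℝ) (|z₀| + 1) ∈ nhds z₀ := by
    apply Metric.closedBall_mem_nhds_of_mem
    simp [Real.dist_eq]
  apply ContinuousOn.continuousAt ?_ hmem
  apply continuousOn_tsum (u := fun m : ℕ => (|z₀| + 1) ^ m / (Nat.factorial m : ℝ))
  · exact fun i => (continuous_const.mul (continuous_pow i)).continuousOn
  · exact Real.summable_pow_div_factorial _
  · intro n x hx
    have hx' : |x| ≤ |z₀| + 1 := by
      simpa [Real.dist_eq] using hx
    have h1 : ‖a n * x ^ n‖ = |a n| * |x| ^ n := by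
      rw [norm_mul, Real.norm_eq_abs, Real.norm_eq_abs, abs_pow]
    rw [h1]
    have h2 : |x| ^ n ≤ (|z₀| + 1) ^ n := pow_le_pow_left₀ (abs_nonneg x) hx' n
    have h3 : (0:ℝ) < (Nat.factorial n : ℝ) := by exact_mod_cast n.factorial_pos
    calc |a n| * |x| ^ n ≤ (1 / (Nat.factorial n : ℝ)) * (|z₀| + 1) ^ n := by
          apply mul_le_mul (ha n) h2 (by positivity) (by positivity)
      _ = (|z₀| + 1) ^ n / (Nat.factorial n : ℝ) := by ring

lemma factorial_bound (m : ℕ) :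
    (1 : ℝ) / ((Nat.factorial m : ℝ) * (Nat.factorial (m + 1) : ℝ)) ≤ 1 / (Nat.factorial m : ℝ) := by
  have h1 : (0:ℝ) < (Nat.factorial m : ℝ) := by exact_mod_cast m.factorial_pos
  have h2 : (1:ℝ) ≤ (Nat.factorial (m+1) : ℝ) := by exact_mod_cast (m+1).factorial_pos
  rw [div_le_div_iff₀ (by positivity) h1]
  nlinarith

lemma continuous_Kker (c : ℝ) : Continuous fun p : ℝ × ℝ => Kker c p.1 p.2 := by
  have hs := continuous_series_aux
    (fun m => 1 / ((Nat.factorial m : ℝ) * (Nat.factorial (m + 1) : ℝ)))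
    (fun m => by
      rw [abs_of_nonneg (by positivity)]
      exact factorial_bound m)
  have heq : (fun p : ℝ × ℝ => Kker c p.1 p.2) = fun p : ℝ × ℝ =>
      -(c / 2) * p.1 * ((fun z : ℝ => ∑' m : ℕ,
        (1 / ((Nat.factorial m : ℝ) * (Nat.factorial (m + 1) : ℝ))) * z ^ m)
          (c * (p.1 ^ 2 - p.2 ^ 2) / 4)) := by
    funext p
    unfold Kker
    congr 1
    exact tsum_congr fun m => by ring
  rw [heq]
  apply Continuous.mul
  · exact continuous_const.mul continuous_fst
  · exact hs.comp (by continuity)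

lemma continuous_Lker (c : ℝ) : Continuous fun p : ℝ × ℝ => Lker c p.1 p.2 := by
  have hs := continuous_series_aux
    (fun m => (-1 : ℝ) ^ m / ((Nat.factorial m : ℝ) * (Nat.factorial (m + 1) : ℝ)))
    (fun m => by
      rw [abs_div, abs_pow, abs_neg, abs_one, one_pow]
      rw [abs_of_nonneg (by positivity : (0:ℝ) ≤ (Nat.factorial m : ℝ) * (Nat.factorial (m+1) : ℝ))]
      exact factorial_bound m)
  have heq : (fun p : ℝ × ℝ => Lker c p.1 p.2) = fun p : ℝ × ℝ =>
      -(c / 2) * p.1 * ((fun z : ℝ => ∑' m : ℕ,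
        ((-1 : ℝ) ^ m / ((Nat.factorial m : ℝ) * (Nat.factorial (m + 1) : ℝ))) * z ^ m)
          (c * (p.1 ^ 2 - p.2 ^ 2) / 4)) := by
    funext p
    unfold Lker
    congr 1
    exact tsum_congr fun m => by ring
  rw [heq]
  apply Continuous.mul
  · exact continuous_const.mul continuous_fst
  · exact hs.comp (by continuity)

/-- Cauchy–Schwarz for interval integrals, squared form. -/
lemma cs_sq (a b : ℝ) (hab : a ≤ b) (f g : ℝ → ℝ) (hf : Continuous f) (hg : Continuous g) :
    (∫ x in a..b, f x * g x) ^ 2 ≤ (∫ x in a..b, f x ^ 2) * (∫ x in a..b, g x ^ 2) := by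
  set A := ∫ x in a..b, f x ^ 2 with hA
  set B := ∫ x in a..b, f x * g x with hB
  set C := ∫ x in a..b, g x ^ 2 with hC
  have key : ∀ lam : ℝ, 0 ≤ A * (lam * lam) + (2 * B) * lam + C := by
    intro lam
    have h0 : 0 ≤ ∫ x in a..b, (lam * f x + g x) ^ 2 :=
      intervalIntegral.integral_nonneg hab fun x _ => sq_nonneg _
    have h1 : (∫ x in a..b, (lam * f x + g x) ^ 2)
        = lam ^ 2 * A + 2 * lam * B + C := by
      have heq : (fun x => (lam * f x + g x) ^ 2)
          = fun x => (lam ^ 2) * f x ^ 2 + ((2 * lam) * (f x * g x) + g x ^ 2) := by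
        funext x; ring
      rw [heq, intervalIntegral.integral_add, intervalIntegral.integral_add,
        intervalIntegral.integral_const_mul, intervalIntegral.integral_const_mul]
      · ring
      · exact (continuous_const.mul (hf.mul hg)).intervalIntegrable a b
      · exact (hg.pow 2).intervalIntegrable a b
      · exact (continuous_const.mul (hf.pow 2)).intervalIntegrable a b
      · exact ((continuous_const.mul (hf.mul hg)).add (hg.pow 2)).intervalIntegrable a b
    nlinarith [h0, h1]
  have hd : discrim A (2 * B) C ≤ 0 := discrim_le_zero key
  rw [discrim] at hd
  nlinarith [hd]

/-- Cauchy–Schwarz for interval integrals, absolute-value form. -/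
lemma cs_abs (a b : ℝ) (hab : a ≤ b) (f g : ℝ → ℝ) (hf : Continuous f) (hg : Continuous g) :
    |∫ x in a..b, f x * g x| ≤
      Real.sqrt (∫ x in a..b, f x ^ 2) * Real.sqrt (∫ x in a..b, g x ^ 2) := by
  have h := cs_sq a b hab f g hf hg
  have hA : 0 ≤ ∫ x in a..b, f x ^ 2 :=
    intervalIntegral.integral_nonneg hab fun x _ => sq_nonneg _
  calc |∫ x in a..b, f x * g x| = Real.sqrt ((∫ x in a..b, f x * g x) ^ 2) :=
        (Real.sqrt_sq_eq_abs _).symm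
    _ ≤ Real.sqrt ((∫ x in a..b, f x ^ 2) * (∫ x in a..b, g x ^ 2)) := Real.sqrt_le_sqrt h
    _ = Real.sqrt (∫ x in a..b, f x ^ 2) * Real.sqrt (∫ x in a..b, g x ^ 2) :=
        Real.sqrt_mul hA _

/-- Integration by parts for a function with vanishing derivative at the endpoints. -/
lemma ipp_aux (f : ℝ → ℝ) (hf : ContDiff ℝ 2 f)
    (hf' : Continuous (deriv f)) (hf'' : Continuous (deriv (deriv f)))
    (h0 : deriv f 0 = 0) (h1 : deriv f 1 = 0) :
    ∫ x in (0:ℝ)..1, f x * deriv (deriv f) x = - ∫ x in (0:ℝ)..1, (deriv f x) ^ 2 := by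
  have hdf : Differentiable ℝ f := hf.differentiable (by norm_num)
  have hdf2 : Differentiable ℝ (deriv f) := by
    have h2 : ContDiff ℝ (1 + 1) f := by
      have : ((1:WithTop ℕ∞) + 1) = 2 := by norm_num
      rwa [this]
    exact ((contDiff_succ_iff_deriv.mp h2).2.2).differentiable one_ne_zero
  have key := intervalIntegral.integral_deriv_mul_eq_sub (a := 0) (b := 1)
    (u := f) (v := deriv f) (u' := deriv f) (v' := deriv (deriv f))
    (fun x _ => (hdf x).hasDerivAt) (fun x _ => (hdf2 x).hasDerivAt)
    (hf'.intervalIntegrable 0 1) (hf''.intervalIntegrable 0 1)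
  rw [h0, h1] at key
  have hsplit : ∫ x in (0:ℝ)..1, (deriv f x * deriv f x + f x * deriv (deriv f) x)
      = (∫ x in (0:ℝ)..1, deriv f x * deriv f x) + ∫ x in (0:ℝ)..1, f x * deriv (deriv f) x :=
    intervalIntegral.integral_add ((hf'.mul hf').intervalIntegrable 0 1)
      ((hf.continuous.mul hf'').intervalIntegrable 0 1)
  have hsq : (∫ x in (0:ℝ)..1, deriv f x * deriv f x) = ∫ x in (0:ℝ)..1, (deriv f x) ^ 2 := by
    congr 1; funext x; ring
  rw [hsplit, hsq] at key
  linarith [key]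

/-- kernel Cauchy–Schwarz bound. -/
lemma kernel_bound (Kc : ℝ → ℝ → ℝ) (hKc : Continuous fun p : ℝ × ℝ => Kc p.1 p.2)
    (f : ℝ → ℝ) (hf : Continuous f) :
    (∫ x in (0:ℝ)..1, (∫ y in (0:ℝ)..x, Kc x y * f y) ^ 2)
      ≤ (∫ x in (0:ℝ)..1, ∫ y in (0:ℝ)..x, (Kc x y) ^ 2) * ∫ y in (0:ℝ)..1, f y ^ 2 := by
  set C := ∫ y in (0:ℝ)..1, f y ^ 2 with hC
  have hC0 : 0 ≤ C := intervalIntegral.integral_nonneg zero_le_one fun x _ => sq_nonneg _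
  have hGcont : Continuous fun x => ∫ y in (0:ℝ)..x, Kc x y * f y := by
    apply intervalIntegral.continuous_parametric_intervalIntegral_of_continuous
      (f := fun x y => Kc x y * f y) (μ := volume) (s := fun x => x)
    · exact hKc.mul (hf.comp continuous_snd)
    · exact continuous_id
  have hQcont : Continuous fun x => ∫ y in (0:ℝ)..x, (Kc x y) ^ 2 := by
    apply intervalIntegral.continuous_parametric_intervalIntegral_of_continuous
      (f := fun x y => (Kc x y) ^ 2) (μ := volume) (s := fun x => x)
    · exact hKc.pow 2
    · exact continuous_id
  have pointwise : ∀ x ∈ Icc (0:ℝ) 1,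
      (∫ y in (0:ℝ)..x, Kc x y * f y) ^ 2 ≤ (∫ y in (0:ℝ)..x, (Kc x y) ^ 2) * C := by
    intro x hx
    have h1 : (∫ y in (0:ℝ)..x, Kc x y * f y) ^ 2
        ≤ (∫ y in (0:ℝ)..x, (Kc x y) ^ 2) * (∫ y in (0:ℝ)..x, f y ^ 2) :=
      cs_sq 0 x hx.1 (fun y => Kc x y) f
        (hKc.comp (continuous_const.prodMk continuous_id)) hf
    have h2 : (∫ y in (0:ℝ)..x, f y ^ 2) ≤ C := by
      apply intervalIntegral.integral_mono_interval le_rfl hx.1 hx.2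
      · exact Filter.Eventually.of_forall fun y => sq_nonneg _
      · exact (hf.pow 2).intervalIntegrable 0 1
    have h3 : 0 ≤ ∫ y in (0:ℝ)..x, (Kc x y) ^ 2 :=
      intervalIntegral.integral_nonneg hx.1 fun y _ => sq_nonneg _
    calc (∫ y in (0:ℝ)..x, Kc x y * f y) ^ 2
        ≤ (∫ y in (0:ℝ)..x, (Kc x y) ^ 2) * (∫ y in (0:ℝ)..x, f y ^ 2) := h1
      _ ≤ (∫ y in (0:ℝ)..x, (Kc x y) ^ 2) * C := mul_le_mul_of_nonneg_left h2 h3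
  calc (∫ x in (0:ℝ)..1, (∫ y in (0:ℝ)..x, Kc x y * f y) ^ 2)
      ≤ ∫ x in (0:ℝ)..1, (∫ y in (0:ℝ)..x, (Kc x y) ^ 2) * C :=
        intervalIntegral.integral_mono_on zero_le_one
          ((hGcont.pow 2).intervalIntegrable 0 1)
          ((hQcont.mul continuous_const).intervalIntegrable 0 1) pointwise
    _ = (∫ x in (0:ℝ)..1, ∫ y in (0:ℝ)..x, (Kc x y) ^ 2) * C :=
        intervalIntegral.integral_mul_const C _

lemma kerNorm_sq' (g : ℝ → ℝ → ℝ) :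
    (kerNorm g) ^ 2 = ∫ x in (0:ℝ)..1, ∫ y in (0:ℝ)..x, (g x y) ^ 2 := by
  apply Real.sq_sqrt
  apply intervalIntegral.integral_nonneg zero_le_one
  intro x hx
  exact intervalIntegral.integral_nonneg hx.1 fun y _ => sq_nonneg _

lemma hasDerivAt_W (tw : ℝ → ℝ → ℝ)
    (htw_cont : Continuous fun p : ℝ × ℝ => tw p.1 p.2)
    (htw_t : ∀ x : ℝ, ContDiff ℝ 1 fun t => tw x t)
    (htwt_cont : Continuous fun p : ℝ × ℝ => deriv (fun t => tw p.1 t) p.2)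
    (t₀ : ℝ) :
    HasDerivAt (fun s => ∫ x in (0:ℝ)..1, tw x s ^ 2)
      (∫ x in (0:ℝ)..1, 2 * tw x t₀ * deriv (fun τ => tw x τ) t₀) t₀ := by
  have ctw : ∀ s : ℝ, Continuous fun x => tw x s := fun s =>
    htw_cont.comp (continuous_id.prodMk continuous_const)
  have ctwt : Continuous fun p : ℝ × ℝ => 2 * tw p.1 p.2 * deriv (fun τ => tw p.1 τ) p.2 :=
    (continuous_const.mul htw_cont).mul htwt_cont
  have hcpt : IsCompact ((Icc (0:ℝ) 1) ×ˢ (Icc (t₀ - 1) (t₀ + 1))) :=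
    isCompact_Icc.prod isCompact_Icc
  obtain ⟨M, hM⟩ := hcpt.exists_bound_of_continuousOn ctwt.continuousOn
  have main := intervalIntegral.hasDerivAt_integral_of_dominated_loc_of_deriv_le
    (F := fun s x => tw x s ^ 2)
    (F' := fun s x => 2 * tw x s * deriv (fun τ => tw x τ) s)
    (x₀ := t₀) (a := (0:ℝ)) (b := 1) (s := Metric.ball t₀ 1) (μ := volume) (bound := fun _ => M)
    (Metric.ball_mem_nhds t₀ one_pos)
    (Filter.Eventually.of_forall fun s => ((ctw s).pow 2).aestronglyMeasurable)
    (((ctw t₀).pow 2).intervalIntegrable 0 1)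
    ((ctwt.comp (continuous_id.prodMk continuous_const)).aestronglyMeasurable)
    ?_ (intervalIntegrable_const) ?_
  · exact main.2
  · apply Filter.Eventually.of_forall
    intro x hx s hs
    have hx' : x ∈ Icc (0:ℝ) 1 := by
      rw [Set.uIoc_of_le zero_le_one] at hx
      exact Ioc_subset_Icc_self hx
    have hs' : s ∈ Icc (t₀ - 1) (t₀ + 1) := by
      rw [Metric.mem_ball, Real.dist_eq, abs_sub_lt_iff] at hs
      constructor <;> linarith [hs.1, hs.2]
    exact hM (x, s) ⟨hx', hs'⟩
  · apply Filter.Eventually.of_forall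
    intro x _ s _
    have hd : HasDerivAt (fun τ => tw x τ) (deriv (fun τ => tw x τ) s) s :=
      (((htw_t x).differentiable one_ne_zero) s).hasDerivAt
    have := hd.fun_pow 2
    exact this.congr_deriv (by norm_num)
/-- Theorem 9: exponential decay of the backstepping target system.
If `c₂ + ρ > (|αβ|/γ)(1 + ‖L‖)(1 + ‖K‖)` then the Lyapunov analysis yields
`∫₀¹ w̃(x,t)²dx ≤ e^{−2c₃t}∫₀¹ w̃(x,0)²dx`, and the elliptic state obeys the
corresponding bound. -/
theorem target_system_exponential_decay (ρ α β γ c₂ : ℝ) (hγ : γ > 0) (hc₂ : c₂ > 0)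
    (tw v : ℝ → ℝ → ℝ)
    -- regularity
    (htw_cont : Continuous fun p : ℝ × ℝ => tw p.1 p.2)
    (hv_cont : Continuous fun p : ℝ × ℝ => v p.1 p.2)
    (htw_x : ∀ t : ℝ, ContDiff ℝ 2 fun x => tw x t)
    (hv_x : ∀ t : ℝ, ContDiff ℝ 2 fun x => v x t)
    (htwx_cont : Continuous fun p : ℝ × ℝ => deriv (fun x => tw x p.2) p.1)
    (htwxx_cont : Continuous fun p : ℝ × ℝ => deriv (deriv (fun x => tw x p.2)) p.1)
    (hvx_cont : Continuous fun p : ℝ × ℝ => deriv (fun x => v x p.2) p.1)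
    (hvxx_cont : Continuous fun p : ℝ × ℝ => deriv (deriv (fun x => v x p.2)) p.1)
    (htw_t : ∀ x : ℝ, ContDiff ℝ 1 fun t => tw x t)
    (htwt_cont : Continuous fun p : ℝ × ℝ => deriv (fun t => tw p.1 t) p.2)
    -- the target system
    (hpde : ∀ x ∈ Set.Icc (0:ℝ) 1, ∀ t : ℝ, 0 ≤ t →
      deriv (fun τ => tw x τ) t =
        deriv (deriv (fun ξ => tw ξ t)) x - (c₂ + ρ) * tw x t + α * v x t -
          α * ∫ y in (0:ℝ)..x, Kker c₂ x y * v y t)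
    (hell : ∀ x ∈ Set.Icc (0:ℝ) 1, ∀ t : ℝ, 0 ≤ t →
      (0 : ℝ) = deriv (deriv (fun ξ => v ξ t)) x - γ * v x t + β * tw x t +
        β * ∫ y in (0:ℝ)..x, Lker c₂ x y * tw y t)
    (hbw0 : ∀ t : ℝ, 0 ≤ t → deriv (fun ξ => tw ξ t) 0 = 0)
    (hbw1 : ∀ t : ℝ, 0 ≤ t → deriv (fun ξ => tw ξ t) 1 = 0)
    (hbv0 : ∀ t : ℝ, 0 ≤ t → deriv (fun ξ => v ξ t) 0 = 0)
    (hbv1 : ∀ t : ℝ, 0 ≤ t → deriv (fun ξ => v ξ t) 1 = 0)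
    -- the stability condition
    (hcond : c₂ + ρ >
      (|α * β| / γ) * (1 + kerNorm (Lker c₂)) * (1 + kerNorm (Kker c₂)))
    (c₃ : ℝ)
    (hc₃ : c₃ = (c₂ + ρ) -
      (|α * β| / γ) * (1 + kerNorm (Lker c₂)) * (1 + kerNorm (Kker c₂))) :
    ∀ t : ℝ, 0 ≤ t →
      (∫ x in (0:ℝ)..1, (tw x t) ^ 2) ≤
        Real.exp (-2 * c₃ * t) * ∫ x in (0:ℝ)..1, (tw x 0) ^ 2 ∧
      (∫ x in (0:ℝ)..1, (v x t) ^ 2) ≤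
        (β / γ) ^ 2 * (1 + kerNorm (Lker c₂)) ^ 2 *
          (Real.exp (-2 * c₃ * t) * ∫ x in (0:ℝ)..1, (tw x 0) ^ 2) := by
  have hγ' : γ ≠ 0 := ne_of_gt hγ
  have hKC : Continuous fun p : ℝ × ℝ => Kker c₂ p.1 p.2 := continuous_Kker c₂
  have hLC : Continuous fun p : ℝ × ℝ => Lker c₂ p.1 p.2 := continuous_Lker c₂
  have hnL0 : 0 ≤ kerNorm (Lker c₂) := Real.sqrt_nonneg _
  have hnK0 : 0 ≤ kerNorm (Kker c₂) := Real.sqrt_nonneg _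
  have hnLsq : kerNorm (Lker c₂) ^ 2
      = ∫ x in (0:ℝ)..1, ∫ y in (0:ℝ)..x, (Lker c₂ x y) ^ 2 := kerNorm_sq' _
  have hnKsq : kerNorm (Kker c₂) ^ 2
      = ∫ x in (0:ℝ)..1, ∫ y in (0:ℝ)..x, (Kker c₂ x y) ^ 2 := kerNorm_sq' _
  -- time slices
  have ctw : ∀ s : ℝ, Continuous fun x => tw x s := fun s =>
    htw_cont.comp (continuous_id.prodMk continuous_const)
  have cv : ∀ s : ℝ, Continuous fun x => v x s := fun s =>
    hv_cont.comp (continuous_id.prodMk continuous_const)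
  have ctwx : ∀ s : ℝ, Continuous (deriv (fun x => tw x s)) := fun s =>
    htwx_cont.comp (continuous_id.prodMk continuous_const)
  have ctwxx : ∀ s : ℝ, Continuous (deriv (deriv (fun x => tw x s))) := fun s =>
    htwxx_cont.comp (continuous_id.prodMk continuous_const)
  have cvx : ∀ s : ℝ, Continuous (deriv (fun x => v x s)) := fun s =>
    hvx_cont.comp (continuous_id.prodMk continuous_const)
  have cvxx : ∀ s : ℝ, Continuous (deriv (deriv (fun x => v x s))) := fun s =>
    hvxx_cont.comp (continuous_id.prodMk continuous_const)
  have hW0 : ∀ s : ℝ, 0 ≤ ∫ x in (0:ℝ)..1, tw x s ^ 2 := fun s =>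
    intervalIntegral.integral_nonneg zero_le_one fun x _ => sq_nonneg _
  have hV0 : ∀ s : ℝ, 0 ≤ ∫ x in (0:ℝ)..1, v x s ^ 2 := fun s =>
    intervalIntegral.integral_nonneg zero_le_one fun x _ => sq_nonneg _
  -- continuity of the kernel convolutions
  have hHc : ∀ s : ℝ, Continuous fun x => ∫ y in (0:ℝ)..x, Lker c₂ x y * tw y s := by
    intro s
    apply intervalIntegral.continuous_parametric_intervalIntegral_of_continuous
      (f := fun x y => Lker c₂ x y * tw y s) (μ := volume) (s := fun x => x)
    · exact hLC.mul ((ctw s).comp continuous_snd)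
    · exact continuous_id
  have hGc : ∀ s : ℝ, Continuous fun x => ∫ y in (0:ℝ)..x, Kker c₂ x y * v y s := by
    intro s
    apply intervalIntegral.continuous_parametric_intervalIntegral_of_continuous
      (f := fun x y => Kker c₂ x y * v y s) (μ := volume) (s := fun x => x)
    · exact hKC.mul ((cv s).comp continuous_snd)
    · exact continuous_id
  -- the elliptic estimate: ‖v‖ ≤ (|β|/γ)(1+‖L‖)‖w̃‖
  have hellb : ∀ s : ℝ, 0 ≤ s →
      Real.sqrt (∫ x in (0:ℝ)..1, v x s ^ 2)
        ≤ |β| / γ * (1 + kerNorm (Lker c₂)) * Real.sqrt (∫ x in (0:ℝ)..1, tw x s ^ 2) := by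
    intro s hs
    have hvpp : (∫ x in (0:ℝ)..1, v x s * deriv (deriv (fun ξ => v ξ s)) x)
        = - ∫ x in (0:ℝ)..1, (deriv (fun ξ => v ξ s) x) ^ 2 :=
      ipp_aux (fun ξ => v ξ s) (hv_x s) (cvx s) (cvxx s) (hbv0 s hs) (hbv1 s hs)
    have i1 : IntervalIntegrable (fun x => v x s * deriv (deriv (fun ξ => v ξ s)) x)
        volume 0 1 := ((cv s).mul (cvxx s)).intervalIntegrable 0 1
    have i2 : IntervalIntegrable (fun x => β * (tw x s * v x s)) volume 0 1 :=
      (continuous_const.mul ((ctw s).mul (cv s))).intervalIntegrable 0 1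
    have i3 : IntervalIntegrable
        (fun x => β * ((∫ y in (0:ℝ)..x, Lker c₂ x y * tw y s) * v x s)) volume 0 1 :=
      (continuous_const.mul ((hHc s).mul (cv s))).intervalIntegrable 0 1
    have hid : (∫ x in (0:ℝ)..1, γ * v x s ^ 2)
        = (∫ x in (0:ℝ)..1, v x s * deriv (deriv (fun ξ => v ξ s)) x)
          + ((∫ x in (0:ℝ)..1, β * (tw x s * v x s))
          + (∫ x in (0:ℝ)..1, β * ((∫ y in (0:ℝ)..x, Lker c₂ x y * tw y s) * v x s))) := by
      rw [← intervalIntegral.integral_add i2 i3, ← intervalIntegral.integral_add i1 (i2.add i3)]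
      apply intervalIntegral.integral_congr
      intro x hx
      have hx' : x ∈ Icc (0:ℝ) 1 := by rwa [Set.uIcc_of_le zero_le_one] at hx
      have he := hell x hx' s hs
      beta_reduce
      linear_combination (v x s) * he
    rw [intervalIntegral.integral_const_mul, intervalIntegral.integral_const_mul,
      intervalIntegral.integral_const_mul] at hid
    have hb2 : |∫ x in (0:ℝ)..1, tw x s * v x s|
        ≤ Real.sqrt (∫ x in (0:ℝ)..1, tw x s ^ 2) * Real.sqrt (∫ x in (0:ℝ)..1, v x s ^ 2) :=
      cs_abs 0 1 zero_le_one _ _ (ctw s) (cv s)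
    have hkb : (∫ x in (0:ℝ)..1, (∫ y in (0:ℝ)..x, Lker c₂ x y * tw y s) ^ 2)
        ≤ (∫ x in (0:ℝ)..1, ∫ y in (0:ℝ)..x, (Lker c₂ x y) ^ 2)
            * ∫ x in (0:ℝ)..1, tw x s ^ 2 :=
      kernel_bound (Lker c₂) hLC (fun y => tw y s) (ctw s)
    have h3' : (∫ x in (0:ℝ)..1, (∫ y in (0:ℝ)..x, Lker c₂ x y * tw y s) ^ 2)
        ≤ kerNorm (Lker c₂) ^ 2 * ∫ x in (0:ℝ)..1, tw x s ^ 2 := by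
      rw [hnLsq]; exact hkb
    have h2 : Real.sqrt (∫ x in (0:ℝ)..1, (∫ y in (0:ℝ)..x, Lker c₂ x y * tw y s) ^ 2)
        ≤ kerNorm (Lker c₂) * Real.sqrt (∫ x in (0:ℝ)..1, tw x s ^ 2) := by
      calc Real.sqrt (∫ x in (0:ℝ)..1, (∫ y in (0:ℝ)..x, Lker c₂ x y * tw y s) ^ 2)
          ≤ Real.sqrt (kerNorm (Lker c₂) ^ 2 * ∫ x in (0:ℝ)..1, tw x s ^ 2) :=
            Real.sqrt_le_sqrt h3'
        _ = kerNorm (Lker c₂) * Real.sqrt (∫ x in (0:ℝ)..1, tw x s ^ 2) := by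
            rw [Real.sqrt_mul (sq_nonneg _), Real.sqrt_sq hnL0]
    have hb3 : |∫ x in (0:ℝ)..1, (∫ y in (0:ℝ)..x, Lker c₂ x y * tw y s) * v x s|
        ≤ (kerNorm (Lker c₂) * Real.sqrt (∫ x in (0:ℝ)..1, tw x s ^ 2))
            * Real.sqrt (∫ x in (0:ℝ)..1, v x s ^ 2) := by
      have h1 : |∫ x in (0:ℝ)..1, (∫ y in (0:ℝ)..x, Lker c₂ x y * tw y s) * v x s|
          ≤ Real.sqrt (∫ x in (0:ℝ)..1, (∫ y in (0:ℝ)..x, Lker c₂ x y * tw y s) ^ 2)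
              * Real.sqrt (∫ x in (0:ℝ)..1, v x s ^ 2) :=
        cs_abs 0 1 zero_le_one _ _ (hHc s) (cv s)
      exact h1.trans (mul_le_mul_of_nonneg_right h2 (Real.sqrt_nonneg _))
    set sW := Real.sqrt (∫ x in (0:ℝ)..1, tw x s ^ 2) with hsWdef
    set sV := Real.sqrt (∫ x in (0:ℝ)..1, v x s ^ 2) with hsVdef
    have hsW0 : 0 ≤ sW := Real.sqrt_nonneg _
    have hsV0 : 0 ≤ sV := Real.sqrt_nonneg _
    have hvpp' : (∫ x in (0:ℝ)..1, v x s * deriv (deriv (fun ξ => v ξ s)) x) ≤ 0 := by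
      rw [hvpp]
      exact neg_nonpos_of_nonneg
        (intervalIntegral.integral_nonneg zero_le_one fun x _ => sq_nonneg _)
    have key : γ * (∫ x in (0:ℝ)..1, v x s ^ 2)
        ≤ |β| * (1 + kerNorm (Lker c₂)) * (sW * sV) := by
      have e2 : β * (∫ x in (0:ℝ)..1, tw x s * v x s) ≤ |β| * (sW * sV) := by
        calc β * (∫ x in (0:ℝ)..1, tw x s * v x s)
            ≤ |β * (∫ x in (0:ℝ)..1, tw x s * v x s)| := le_abs_self _
          _ = |β| * |∫ x in (0:ℝ)..1, tw x s * v x s| := abs_mul _ _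
          _ ≤ |β| * (sW * sV) := mul_le_mul_of_nonneg_left hb2 (abs_nonneg β)
      have e3 : β * (∫ x in (0:ℝ)..1, (∫ y in (0:ℝ)..x, Lker c₂ x y * tw y s) * v x s)
          ≤ |β| * ((kerNorm (Lker c₂) * sW) * sV) := by
        calc β * (∫ x in (0:ℝ)..1, (∫ y in (0:ℝ)..x, Lker c₂ x y * tw y s) * v x s)
            ≤ |β * (∫ x in (0:ℝ)..1, (∫ y in (0:ℝ)..x, Lker c₂ x y * tw y s) * v x s)| :=
              le_abs_self _
          _ = |β| * |∫ x in (0:ℝ)..1, (∫ y in (0:ℝ)..x, Lker c₂ x y * tw y s) * v x s| :=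
              abs_mul _ _
          _ ≤ |β| * ((kerNorm (Lker c₂) * sW) * sV) :=
              mul_le_mul_of_nonneg_left hb3 (abs_nonneg β)
      have hr : |β| * (sW * sV) + |β| * ((kerNorm (Lker c₂) * sW) * sV)
          = |β| * (1 + kerNorm (Lker c₂)) * (sW * sV) := by ring
      linarith [hid, hvpp', e2, e3, hr]
    rcases eq_or_lt_of_le hsV0 with h | h
    · rw [← h]; positivity
    · have hVs : (∫ x in (0:ℝ)..1, v x s ^ 2) = sV * sV := (Real.mul_self_sqrt (hV0 s)).symm
      rw [hVs] at key
      have h4 : γ * sV ≤ |β| * (1 + kerNorm (Lker c₂)) * sW := by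
        have hk' : (γ * sV) * sV ≤ (|β| * (1 + kerNorm (Lker c₂)) * sW) * sV := by
          nlinarith [key]
        exact le_of_mul_le_mul_right hk' h
      have h5 : sV ≤ (|β| * (1 + kerNorm (Lker c₂)) * sW) / γ := by
        rw [le_div_iff₀ hγ, mul_comm]
        exact h4
      calc sV ≤ (|β| * (1 + kerNorm (Lker c₂)) * sW) / γ := h5
        _ = |β| / γ * (1 + kerNorm (Lker c₂)) * sW := by ring
  -- the Lyapunov derivative estimate
  have hDle : ∀ s : ℝ, 0 ≤ s →
      (∫ x in (0:ℝ)..1, 2 * tw x s * deriv (fun τ => tw x τ) s)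
        ≤ -2 * c₃ * ∫ x in (0:ℝ)..1, tw x s ^ 2 := by
    intro s hs
    have hipp : (∫ x in (0:ℝ)..1, tw x s * deriv (deriv (fun ξ => tw ξ s)) x)
        = - ∫ x in (0:ℝ)..1, (deriv (fun ξ => tw ξ s) x) ^ 2 :=
      ipp_aux (fun ξ => tw ξ s) (htw_x s) (ctwx s) (ctwxx s) (hbw0 s hs) (hbw1 s hs)
    have i1 : IntervalIntegrable (fun x => 2 * (tw x s * deriv (deriv (fun ξ => tw ξ s)) x))
        volume 0 1 := (continuous_const.mul ((ctw s).mul (ctwxx s))).intervalIntegrable 0 1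
    have iW : IntervalIntegrable (fun x => (-2 * (c₂ + ρ)) * tw x s ^ 2) volume 0 1 :=
      (continuous_const.mul ((ctw s).pow 2)).intervalIntegrable 0 1
    have i2 : IntervalIntegrable (fun x => (2 * α) * (tw x s * v x s)) volume 0 1 :=
      (continuous_const.mul ((ctw s).mul (cv s))).intervalIntegrable 0 1
    have i3 : IntervalIntegrable
        (fun x => (-2 * α) * (tw x s * ∫ y in (0:ℝ)..x, Kker c₂ x y * v y s)) volume 0 1 :=
      (continuous_const.mul ((ctw s).mul (hGc s))).intervalIntegrable 0 1
    have hid : (∫ x in (0:ℝ)..1, 2 * tw x s * deriv (fun τ => tw x τ) s)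
        = (∫ x in (0:ℝ)..1, 2 * (tw x s * deriv (deriv (fun ξ => tw ξ s)) x))
          + ((∫ x in (0:ℝ)..1, (-2 * (c₂ + ρ)) * tw x s ^ 2)
          + ((∫ x in (0:ℝ)..1, (2 * α) * (tw x s * v x s))
          + (∫ x in (0:ℝ)..1, (-2 * α) * (tw x s * ∫ y in (0:ℝ)..x, Kker c₂ x y * v y s)))) := by
      rw [← intervalIntegral.integral_add i2 i3, ← intervalIntegral.integral_add iW (i2.add i3),
        ← intervalIntegral.integral_add i1 (iW.add (i2.add i3))]
      apply intervalIntegral.integral_congr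
      intro x hx
      have hx' : x ∈ Icc (0:ℝ) 1 := by rwa [Set.uIcc_of_le zero_le_one] at hx
      have he := hpde x hx' s hs
      beta_reduce
      linear_combination (2 * tw x s) * he
    rw [intervalIntegral.integral_const_mul, intervalIntegral.integral_const_mul,
      intervalIntegral.integral_const_mul, intervalIntegral.integral_const_mul] at hid
    have hJ1 : (∫ x in (0:ℝ)..1, tw x s * deriv (deriv (fun ξ => tw ξ s)) x) ≤ 0 := by
      rw [hipp]
      exact neg_nonpos_of_nonneg
        (intervalIntegral.integral_nonneg zero_le_one fun x _ => sq_nonneg _)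
    have hb2 : |∫ x in (0:ℝ)..1, tw x s * v x s|
        ≤ Real.sqrt (∫ x in (0:ℝ)..1, tw x s ^ 2) * Real.sqrt (∫ x in (0:ℝ)..1, v x s ^ 2) :=
      cs_abs 0 1 zero_le_one _ _ (ctw s) (cv s)
    have hkb : (∫ x in (0:ℝ)..1, (∫ y in (0:ℝ)..x, Kker c₂ x y * v y s) ^ 2)
        ≤ (∫ x in (0:ℝ)..1, ∫ y in (0:ℝ)..x, (Kker c₂ x y) ^ 2)
            * ∫ x in (0:ℝ)..1, v x s ^ 2 :=
      kernel_bound (Kker c₂) hKC (fun y => v y s) (cv s)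
    have h3' : (∫ x in (0:ℝ)..1, (∫ y in (0:ℝ)..x, Kker c₂ x y * v y s) ^ 2)
        ≤ kerNorm (Kker c₂) ^ 2 * ∫ x in (0:ℝ)..1, v x s ^ 2 := by
      rw [hnKsq]; exact hkb
    have h2 : Real.sqrt (∫ x in (0:ℝ)..1, (∫ y in (0:ℝ)..x, Kker c₂ x y * v y s) ^ 2)
        ≤ kerNorm (Kker c₂) * Real.sqrt (∫ x in (0:ℝ)..1, v x s ^ 2) := by
      calc Real.sqrt (∫ x in (0:ℝ)..1, (∫ y in (0:ℝ)..x, Kker c₂ x y * v y s) ^ 2)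
          ≤ Real.sqrt (kerNorm (Kker c₂) ^ 2 * ∫ x in (0:ℝ)..1, v x s ^ 2) :=
            Real.sqrt_le_sqrt h3'
        _ = kerNorm (Kker c₂) * Real.sqrt (∫ x in (0:ℝ)..1, v x s ^ 2) := by
            rw [Real.sqrt_mul (sq_nonneg _), Real.sqrt_sq hnK0]
    have hb3 : |∫ x in (0:ℝ)..1, tw x s * ∫ y in (0:ℝ)..x, Kker c₂ x y * v y s|
        ≤ Real.sqrt (∫ x in (0:ℝ)..1, tw x s ^ 2)
            * (kerNorm (Kker c₂) * Real.sqrt (∫ x in (0:ℝ)..1, v x s ^ 2)) := by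
      have h1 : |∫ x in (0:ℝ)..1, tw x s * ∫ y in (0:ℝ)..x, Kker c₂ x y * v y s|
          ≤ Real.sqrt (∫ x in (0:ℝ)..1, tw x s ^ 2)
              * Real.sqrt (∫ x in (0:ℝ)..1, (∫ y in (0:ℝ)..x, Kker c₂ x y * v y s) ^ 2) :=
        cs_abs 0 1 zero_le_one _ _ (ctw s) (hGc s)
      exact h1.trans (mul_le_mul_of_nonneg_left h2 (Real.sqrt_nonneg _))
    set sW := Real.sqrt (∫ x in (0:ℝ)..1, tw x s ^ 2) with hsWdef
    set sV := Real.sqrt (∫ x in (0:ℝ)..1, v x s ^ 2) with hsVdef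
    have hsW0 : 0 ≤ sW := Real.sqrt_nonneg _
    have hsV0 : 0 ≤ sV := Real.sqrt_nonneg _
    have hWW : sW * sW = ∫ x in (0:ℝ)..1, tw x s ^ 2 := Real.mul_self_sqrt (hW0 s)
    have hsVle := hellb s hs
    have hA : sW * sV ≤ (|β| / γ * (1 + kerNorm (Lker c₂))) * ∫ x in (0:ℝ)..1, tw x s ^ 2 := by
      calc sW * sV ≤ sW * (|β| / γ * (1 + kerNorm (Lker c₂)) * sW) :=
            mul_le_mul_of_nonneg_left hsVle hsW0
        _ = (|β| / γ * (1 + kerNorm (Lker c₂))) * (sW * sW) := by ring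
        _ = (|β| / γ * (1 + kerNorm (Lker c₂))) * ∫ x in (0:ℝ)..1, tw x s ^ 2 := by rw [hWW]
    have e2 : (2 * α) * (∫ x in (0:ℝ)..1, tw x s * v x s)
        ≤ 2 * |α| * ((|β| / γ * (1 + kerNorm (Lker c₂))) * ∫ x in (0:ℝ)..1, tw x s ^ 2) := by
      have step1 : (2 * α) * (∫ x in (0:ℝ)..1, tw x s * v x s) ≤ 2 * |α| * (sW * sV) := by
        calc (2 * α) * (∫ x in (0:ℝ)..1, tw x s * v x s)
            ≤ |(2 * α) * (∫ x in (0:ℝ)..1, tw x s * v x s)| := le_abs_self _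
          _ = 2 * |α| * |∫ x in (0:ℝ)..1, tw x s * v x s| := by
              rw [abs_mul, abs_mul, abs_two]
          _ ≤ 2 * |α| * (sW * sV) := mul_le_mul_of_nonneg_left hb2 (by positivity)
      exact step1.trans (mul_le_mul_of_nonneg_left hA (by positivity))
    have e3 : (-2 * α) * (∫ x in (0:ℝ)..1, tw x s * ∫ y in (0:ℝ)..x, Kker c₂ x y * v y s)
        ≤ 2 * |α| * (kerNorm (Kker c₂)
            * ((|β| / γ * (1 + kerNorm (Lker c₂))) * ∫ x in (0:ℝ)..1, tw x s ^ 2)) := by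
      have habs : |(-2 * α)| = 2 * |α| := by
        rw [abs_mul]; norm_num
      have step1 : (-2 * α) * (∫ x in (0:ℝ)..1, tw x s * ∫ y in (0:ℝ)..x, Kker c₂ x y * v y s)
          ≤ 2 * |α| * (sW * (kerNorm (Kker c₂) * sV)) := by
        calc (-2 * α) * (∫ x in (0:ℝ)..1, tw x s * ∫ y in (0:ℝ)..x, Kker c₂ x y * v y s)
            ≤ |(-2 * α) * (∫ x in (0:ℝ)..1, tw x s * ∫ y in (0:ℝ)..x, Kker c₂ x y * v y s)| :=
              le_abs_self _
          _ = 2 * |α| * |∫ x in (0:ℝ)..1, tw x s * ∫ y in (0:ℝ)..x, Kker c₂ x y * v y s| := by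
              rw [abs_mul, habs]
          _ ≤ 2 * |α| * (sW * (kerNorm (Kker c₂) * sV)) :=
              mul_le_mul_of_nonneg_left hb3 (by positivity)
      have step2 : sW * (kerNorm (Kker c₂) * sV)
          ≤ kerNorm (Kker c₂)
              * ((|β| / γ * (1 + kerNorm (Lker c₂))) * ∫ x in (0:ℝ)..1, tw x s ^ 2) := by
        calc sW * (kerNorm (Kker c₂) * sV) = kerNorm (Kker c₂) * (sW * sV) := by ring
          _ ≤ kerNorm (Kker c₂)
              * ((|β| / γ * (1 + kerNorm (Lker c₂))) * ∫ x in (0:ℝ)..1, tw x s ^ 2) :=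
            mul_le_mul_of_nonneg_left hA hnK0
      exact step1.trans (mul_le_mul_of_nonneg_left step2 (by positivity))
    have hconst : (-2 * (c₂ + ρ)) * (∫ x in (0:ℝ)..1, tw x s ^ 2)
        + (2 * |α| * ((|β| / γ * (1 + kerNorm (Lker c₂))) * ∫ x in (0:ℝ)..1, tw x s ^ 2)
        + 2 * |α| * (kerNorm (Kker c₂)
            * ((|β| / γ * (1 + kerNorm (Lker c₂))) * ∫ x in (0:ℝ)..1, tw x s ^ 2)))
        = -2 * c₃ * ∫ x in (0:ℝ)..1, tw x s ^ 2 := by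
      rw [hc₃, abs_mul]
      field_simp
      ring
    linarith [hid, hJ1, e2, e3, hconst]
  -- Grönwall
  intro t ht
  have hWd : ∀ s : ℝ, HasDerivAt (fun τ => ∫ x in (0:ℝ)..1, tw x τ ^ 2)
      (∫ x in (0:ℝ)..1, 2 * tw x s * deriv (fun τ => tw x τ) s) s :=
    fun s => hasDerivAt_W tw htw_cont htw_t htwt_cont s
  have hgd : ∀ s : ℝ, HasDerivAt (fun τ => Real.exp (2 * c₃ * τ) * ∫ x in (0:ℝ)..1, tw x τ ^ 2)
      (Real.exp (2 * c₃ * s) * (2 * c₃) * (∫ x in (0:ℝ)..1, tw x s ^ 2)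
        + Real.exp (2 * c₃ * s) * ∫ x in (0:ℝ)..1, 2 * tw x s * deriv (fun τ => tw x τ) s) s := by
    intro s
    have h0 : HasDerivAt (fun τ : ℝ => 2 * c₃ * τ) (2 * c₃) s := by
      simpa using (hasDerivAt_id s).const_mul (2 * c₃)
    have h1 : HasDerivAt (fun τ : ℝ => Real.exp (2 * c₃ * τ))
        (Real.exp (2 * c₃ * s) * (2 * c₃)) s := h0.exp
    exact h1.mul (hWd s)
  have hanti : AntitoneOn (fun τ => Real.exp (2 * c₃ * τ) * ∫ x in (0:ℝ)..1, tw x τ ^ 2)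
      (Ici (0:ℝ)) := by
    apply antitoneOn_of_deriv_nonpos (convex_Ici 0)
    · exact fun s _ => ((hgd s).continuousAt).continuousWithinAt
    · intro s _
      exact ((hgd s).differentiableAt).differentiableWithinAt
    · intro s hs
      rw [interior_Ici] at hs
      rw [(hgd s).deriv]
      have hD := hDle s (le_of_lt hs)
      have hmul := mul_le_mul_of_nonneg_left hD (Real.exp_pos (2 * c₃ * s)).le
      have hz : Real.exp (2 * c₃ * s) * (2 * c₃) * (∫ x in (0:ℝ)..1, tw x s ^ 2)
          + Real.exp (2 * c₃ * s) * (-2 * c₃ * ∫ x in (0:ℝ)..1, tw x s ^ 2) = 0 := by ring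
      linarith [hmul, hz]
  have hg0 := hanti Set.self_mem_Ici (Set.mem_Ici.mpr ht) ht
  simp only [mul_zero, Real.exp_zero, one_mul] at hg0
  have hfirst : (∫ x in (0:ℝ)..1, tw x t ^ 2)
      ≤ Real.exp (-2 * c₃ * t) * ∫ x in (0:ℝ)..1, tw x 0 ^ 2 := by
    have hE := (Real.exp_pos (-(2 * c₃ * t))).le
    have h2 := mul_le_mul_of_nonneg_left hg0 hE
    have h3 : Real.exp (-(2 * c₃ * t)) * (Real.exp (2 * c₃ * t) * ∫ x in (0:ℝ)..1, tw x t ^ 2)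
        = ∫ x in (0:ℝ)..1, tw x t ^ 2 := by
      rw [← mul_assoc, ← Real.exp_add]
      simp
    have h4 : (-2 * c₃ * t) = -(2 * c₃ * t) := by ring
    rw [h4]
    linarith [h2, h3]
  refine ⟨hfirst, ?_⟩
  have hsVle := hellb t ht
  have h2 := mul_self_le_mul_self (Real.sqrt_nonneg (∫ x in (0:ℝ)..1, v x t ^ 2)) hsVle
  rw [Real.mul_self_sqrt (hV0 t)] at h2
  have h3 : (|β| / γ * (1 + kerNorm (Lker c₂)) * Real.sqrt (∫ x in (0:ℝ)..1, tw x t ^ 2))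
      * (|β| / γ * (1 + kerNorm (Lker c₂)) * Real.sqrt (∫ x in (0:ℝ)..1, tw x t ^ 2))
      = (|β| / γ * (1 + kerNorm (Lker c₂))) ^ 2 * ∫ x in (0:ℝ)..1, tw x t ^ 2 := by
    have hmm : Real.sqrt (∫ x in (0:ℝ)..1, tw x t ^ 2)
        * Real.sqrt (∫ x in (0:ℝ)..1, tw x t ^ 2) = ∫ x in (0:ℝ)..1, tw x t ^ 2 :=
      Real.mul_self_sqrt (hW0 t)
    calc (|β| / γ * (1 + kerNorm (Lker c₂)) * Real.sqrt (∫ x in (0:ℝ)..1, tw x t ^ 2))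
        * (|β| / γ * (1 + kerNorm (Lker c₂)) * Real.sqrt (∫ x in (0:ℝ)..1, tw x t ^ 2))
        = (|β| / γ * (1 + kerNorm (Lker c₂))) ^ 2
          * (Real.sqrt (∫ x in (0:ℝ)..1, tw x t ^ 2)
            * Real.sqrt (∫ x in (0:ℝ)..1, tw x t ^ 2)) := by ring
      _ = (|β| / γ * (1 + kerNorm (Lker c₂))) ^ 2 * ∫ x in (0:ℝ)..1, tw x t ^ 2 := by rw [hmm]
  rw [h3] at h2
  have h5 : (|β| / γ * (1 + kerNorm (Lker c₂))) ^ 2 * (∫ x in (0:ℝ)..1, tw x t ^ 2)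
      ≤ (|β| / γ * (1 + kerNorm (Lker c₂))) ^ 2
        * (Real.exp (-2 * c₃ * t) * ∫ x in (0:ℝ)..1, tw x 0 ^ 2) :=
    mul_le_mul_of_nonneg_left hfirst (by positivity)
  have h6 : (β / γ) ^ 2 * (1 + kerNorm (Lker c₂)) ^ 2
      = (|β| / γ * (1 + kerNorm (Lker c₂))) ^ 2 := by
    rw [mul_pow, div_pow, div_pow, sq_abs]
  rw [h6]
  linarith [h2, h5]
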